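/- arXiv:2502.19819 — 2 statements merged into one kernel-verified Lean document; each statement's English description precedes it below -/
import Mathlib

section
/- Let 1 < p < 2. For all y₁, y₂ ∈ R^N one has (|y₁|^{p-2} y₁ − |y₂|^{p-2} y₂) · (y₁ − y₂) ≥ (p−1)(1 + |y₁|² + |y₂|²)^{(p-2)/2} |y₁ − y₂|². -/
open scoped RealInnerProductSpace

private lemma aux_tangent {p : ℝ} (hp1 : 1 < p) (hp2 : p < 2) {a b : ℝ} (hb : 0 ≤ b)
    (hab : b ≤ a) : (p - 1) * a ^ (p - 2) * (a - b) ≤ a ^ (p - 1) - b ^ (p - 1) := by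
  rcases eq_or_lt_of_le (hb.trans hab) with h0 | ha
  · have hb0 : b = 0 := le_antisymm (hab.trans h0.symm.le) hb
    rw [← h0, hb0]
    rw [Real.zero_rpow (sub_ne_zero.mpr (ne_of_gt hp1))]
    simp
  · have ha2 : a ^ (p - 2) * a = a ^ (p - 1) := by
      nth_rewrite 2 [show a = a ^ (1:ℝ) from (Real.rpow_one a).symm]
      rw [← Real.rpow_add ha]; ring_nf
    have hs : -1 ≤ b / a - 1 := by
      have : 0 ≤ b / a := div_nonneg hb ha.le
      linarith
    have hB := rpow_one_add_le_one_add_mul_self hs (p := p - 1) (by linarith) (by linarith)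
    rw [add_sub_cancel] at hB
    have hdiv : (b / a) ^ (p - 1) = b ^ (p - 1) / a ^ (p - 1) := Real.div_rpow hb ha.le (p - 1)
    have hpa : 0 < a ^ (p - 1) := Real.rpow_pos_of_pos ha _
    rw [hdiv, div_le_iff₀ hpa] at hB
    -- hB : b ^ (p-1) ≤ (1 + (p-1) * (b/a - 1)) * a ^ (p-1)
    have h2 : a ^ (p - 1) * (b / a) = a ^ (p - 2) * b := by
      rw [← ha2]; field_simp
    have expand : (1 + (p - 1) * (b / a - 1)) * a ^ (p - 1)
        = a ^ (p - 1) + (p - 1) * (a ^ (p - 1) * (b / a)) - (p - 1) * a ^ (p - 1) := by ring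
    rw [expand, h2] at hB
    have h4 : (p - 1) * a ^ (p - 2) * (a - b)
        = (p - 1) * a ^ (p - 1) - (p - 1) * (a ^ (p - 2) * b) := by
      rw [← ha2]; ring
    linarith

set_option maxHeartbeats 1000000 in
theorem stmt_7 {N : ℕ} (p : ℝ) (hp1 : 1 < p) (hp2 : p < 2)
    (y₁ y₂ : EuclideanSpace ℝ (Fin N)) :
    ⟪‖y₁‖ ^ (p - 2) • y₁ - ‖y₂‖ ^ (p - 2) • y₂, y₁ - y₂⟫ ≥
      (p - 1) * (1 + ‖y₁‖ ^ 2 + ‖y₂‖ ^ 2) ^ ((p - 2) / 2) * ‖y₁ - y₂‖ ^ 2 := by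
  set a := ‖y₁‖ with ha_def
  set b := ‖y₂‖ with hb_def
  set s := ⟪y₁, y₂⟫ with hs_def
  have ha : 0 ≤ a := norm_nonneg _
  have hb : 0 ≤ b := norm_nonneg _
  have hs : |s| ≤ a * b := abs_real_inner_le_norm y₁ y₂
  set M : ℝ := (1 + a ^ 2 + b ^ 2) ^ ((p - 2) / 2) with hM_def
  have hMpos : 0 < M := Real.rpow_pos_of_pos (by positivity) _
  have hmul : ∀ x : ℝ, 0 ≤ x → x ^ (p - 2) * x = x ^ (p - 1) := by
    intro x hx
    rcases hx.eq_or_lt with h | h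
    · rw [← h, Real.zero_rpow (sub_ne_zero.mpr (ne_of_lt hp2)),
        Real.zero_rpow (sub_ne_zero.mpr (ne_of_gt hp1))]; ring
    · nth_rewrite 2 [show x = x ^ (1:ℝ) from (Real.rpow_one x).symm]
      rw [← Real.rpow_add h]; ring_nf
  have hmul2 : ∀ x : ℝ, 0 ≤ x → x ^ (p - 2) * x ^ 2 = x ^ p := by
    intro x hx
    rcases hx.eq_or_lt with h | h
    · rw [← h, Real.zero_rpow (sub_ne_zero.mpr (ne_of_lt hp2)),
        Real.zero_rpow (by positivity)]; ring
    · rw [show (x:ℝ) ^ (2:ℕ) = x ^ (2:ℝ) from (Real.rpow_natCast x 2).symm]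
      rw [← Real.rpow_add h]; ring_nf
  have hMle : ∀ x : ℝ, 0 < x → x ^ 2 ≤ 1 + a ^ 2 + b ^ 2 → M ≤ x ^ (p - 2) := by
    intro x hx hx2
    have h1 := Real.rpow_le_rpow_of_nonpos (by positivity : (0:ℝ) < x ^ 2) hx2
      (by linarith : (p - 2) / 2 ≤ 0)
    have h2 : (x ^ 2 : ℝ) ^ ((p - 2) / 2) = x ^ (p - 2) := by
      rw [show (x:ℝ) ^ (2:ℕ) = x ^ (2:ℝ) from (Real.rpow_natCast x 2).symm,
        ← Real.rpow_mul hx.le]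
      congr 1; ring
    rw [hM_def]
    calc (1 + a ^ 2 + b ^ 2) ^ ((p - 2) / 2) ≤ (x ^ 2) ^ ((p - 2) / 2) := h1
      _ = x ^ (p - 2) := h2
  have key : ∀ x : ℝ, 0 ≤ x → x ^ 2 ≤ 1 + a ^ 2 + b ^ 2 → M * x ≤ x ^ (p - 1) := by
    intro x hx hx2
    rcases hx.eq_or_lt with h | h
    · rw [← h, Real.zero_rpow (sub_ne_zero.mpr (ne_of_gt hp1))]; simp
    · have h1 := hMle x h hx2
      have h2 := hmul x hx
      nlinarith
  have hxa2 : a ^ 2 ≤ 1 + a ^ 2 + b ^ 2 := by nlinarith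
  have hxb2 : b ^ 2 ≤ 1 + a ^ 2 + b ^ 2 := by nlinarith
  have keya := key a ha hxa2
  have keyb := key b hb hxb2
  have endpoint1 : (p - 1) * M * (a - b) ^ 2 ≤ (a ^ (p - 1) - b ^ (p - 1)) * (a - b) := by
    rcases le_total b a with h | h
    · rcases (hb.trans h).eq_or_lt with h0 | ha'
      · have hb0 : b = 0 := le_antisymm (h.trans h0.symm.le) hb
        rw [← h0, hb0]; simp
      · have htan := aux_tangent hp1 hp2 hb h
        have hMa : M ≤ a ^ (p - 2) := hMle a ha' hxa2
        have h1 : M * (a - b) ≤ a ^ (p - 2) * (a - b) :=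
          mul_le_mul_of_nonneg_right hMa (by linarith)
        have h2 := mul_le_mul_of_nonneg_left h1 (by linarith : (0:ℝ) ≤ p - 1)
        have h3 := mul_le_mul_of_nonneg_right htan (by linarith : (0:ℝ) ≤ a - b)
        nlinarith [h2, h3]
    · rcases (ha.trans h).eq_or_lt with h0 | hb'
      · have ha0 : a = 0 := le_antisymm (h.trans h0.symm.le) ha
        rw [← h0, ha0]; simp
      · have htan := aux_tangent hp1 hp2 ha h
        have hMb : M ≤ b ^ (p - 2) := hMle b hb' hxb2
        have h1 : M * (b - a) ≤ b ^ (p - 2) * (b - a) :=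
          mul_le_mul_of_nonneg_right hMb (by linarith)
        have h2 := mul_le_mul_of_nonneg_left h1 (by linarith : (0:ℝ) ≤ p - 1)
        have h3 := mul_le_mul_of_nonneg_right htan (by linarith : (0:ℝ) ≤ b - a)
        nlinarith [h2, h3]
  have endpoint2 : (p - 1) * M * (a + b) ^ 2 ≤ (a ^ (p - 1) + b ^ (p - 1)) * (a + b) := by
    have h1 : M * (a + b) ≤ a ^ (p - 1) + b ^ (p - 1) := by nlinarith
    have h0 : 0 ≤ M * (a + b) := mul_nonneg hMpos.le (by linarith)
    have h2 := mul_le_mul_of_nonneg_right h1 (by linarith : (0:ℝ) ≤ a + b)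
    have h4 : 0 ≤ M * (a + b) * (a + b) := mul_nonneg h0 (by linarith)
    nlinarith [h2, h4, mul_nonneg (by linarith : (0:ℝ) ≤ 2 - p) h4]
  have hinner : ⟪a ^ (p - 2) • y₁ - b ^ (p - 2) • y₂, y₁ - y₂⟫ =
      a ^ p + b ^ p - (a ^ (p - 2) + b ^ (p - 2)) * s := by
    have hcomm : (inner ℝ y₂ y₁ : ℝ) = s := (real_inner_comm y₂ y₁).symm
    simp only [inner_sub_left, inner_sub_right, real_inner_smul_left,
      real_inner_self_eq_norm_sq, ← ha_def, ← hb_def, ← hs_def, hcomm]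
    linear_combination hmul2 a ha + hmul2 b hb
  have hnorm : ‖y₁ - y₂‖ ^ 2 = a ^ 2 + b ^ 2 - 2 * s := by
    rw [norm_sub_sq_real, ← hs_def, ← ha_def, ← hb_def]; ring
  rw [hinner, hnorm, ge_iff_le]
  have e1 : a ^ (p - 1) = a ^ (p - 2) * a := (hmul a ha).symm
  have e2 : b ^ (p - 1) = b ^ (p - 2) * b := (hmul b hb).symm
  have e3 : a ^ p = a ^ (p - 2) * a ^ 2 := (hmul2 a ha).symm
  have e4 : b ^ p = b ^ (p - 2) * b ^ 2 := (hmul2 b hb).symm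
  have hsu : s ≤ a * b := (abs_le.mp hs).2
  have hsl : -(a * b) ≤ s := (abs_le.mp hs).1
  rcases le_total (a ^ (p - 2) + b ^ (p - 2)) (2 * ((p - 1) * M)) with hc | hc
  · have hprod : 0 ≤ (s + a * b) * (2 * ((p - 1) * M) - (a ^ (p - 2) + b ^ (p - 2))) :=
      mul_nonneg (by linarith) (by linarith)
    nlinarith [endpoint2, hprod, e1, e2, e3, e4]
  · have hprod : 0 ≤ (a * b - s) * ((a ^ (p - 2) + b ^ (p - 2)) - 2 * ((p - 1) * M)) :=
      mul_nonneg (by linarith) (by linarith)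
    nlinarith [endpoint1, hprod, e1, e2, e3, e4]
end

section
/- Let (X,d) be a complete metric space, D ⊆ Σ ⊆ X with Σ closed and D nonempty, Γ := Σ \ D, k > 0, and M : D → (0,∞) bounded on compact subsets of D. If x ∈ D satisfies M(x) > 2k/d(x,Γ), then there exists y ∈ D such that M(y) > 2k/d(y,Γ), M(y) ≥ M(x), and M(z) ≤ 2 M(y) for all z ∈ D with d(z,y) ≤ k/M(y). -/
open EMetric ENNReal Filter Finset Topology

theorem stmt_16 {X : Type*} [MetricSpace X] [CompleteSpace X]
    (D S : Set X) (hne : D.Nonempty) (hsub : D ⊆ S) (hcl : IsClosed S)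
    (k : ℝ) (hk : 0 < k) (M : X → ℝ) (hMpos : ∀ x ∈ D, 0 < M x)
    (hbdd : ∀ K : Set X, K ⊆ D → IsCompact K → ∃ B : ℝ, ∀ x ∈ K, M x ≤ B)
    (x : X) (hx : x ∈ D)
    (hMx : ENNReal.ofReal (2 * k / M x) < EMetric.infEdist x (S \ D)) :
    ∃ y ∈ D,
      ENNReal.ofReal (2 * k / M y) < EMetric.infEdist y (S \ D) ∧
      M x ≤ M y ∧
      ∀ z ∈ D, dist z y ≤ k / M y → M z ≤ 2 * M y := by
  by_contra hcon
  push_neg at hcon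
  have Mxpos := hMpos x hx
  set Γ := S \ D with hΓ
  set G : X → Prop := fun y => y ∈ D ∧
    ENNReal.ofReal (2 * k / M y) < EMetric.infEdist y Γ ∧ M x ≤ M y with hG
  have step : ∀ y, G y → ∃ z, G z ∧ dist z y ≤ k / M y ∧ 2 * M y < M z := by
    rintro y ⟨hyD, hycond, hyM⟩
    obtain ⟨z, hzD, hdzy, hMz⟩ := hcon y hyD hycond hyM
    have Myp := hMpos y hyD
    have Mzp := hMpos z hzD
    refine ⟨z, ⟨hzD, ?_, by linarith⟩, hdzy, hMz⟩
    have h2 : edist y z ≤ ENNReal.ofReal (k / M y) := by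
      rw [edist_dist]
      exact ENNReal.ofReal_le_ofReal (by rw [dist_comm]; exact hdzy)
    have key : ENNReal.ofReal (k / M y) < EMetric.infEdist z Γ := by
      have h3 : ENNReal.ofReal (k / M y) + ENNReal.ofReal (k / M y)
          < EMetric.infEdist z Γ + ENNReal.ofReal (k / M y) := by
        calc ENNReal.ofReal (k / M y) + ENNReal.ofReal (k / M y)
            = ENNReal.ofReal (2 * k / M y) := by
              rw [← ENNReal.ofReal_add (by positivity) (by positivity)]; ring_nf
          _ < EMetric.infEdist y Γ := hycond
          _ ≤ EMetric.infEdist z Γ + edist y z := infEdist_le_infEdist_add_edist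
          _ ≤ EMetric.infEdist z Γ + ENNReal.ofReal (k / M y) := add_le_add_right h2 _
      exact lt_of_add_lt_add_right h3
    refine lt_of_le_of_lt (ENNReal.ofReal_le_ofReal ?_) key
    rw [div_le_div_iff₀ Mzp Myp]
    nlinarith
  choose f hfG hfd hfM using step
  have hGx : G x := ⟨hx, hMx, le_refl _⟩
  let u : ℕ → {y : X // G y} := fun n =>
    Nat.rec ⟨x, hGx⟩ (fun _ p => ⟨f p.1 p.2, hfG p.1 p.2⟩) n
  set v : ℕ → X := fun n => (u n).1 with hv
  have hv0 : v 0 = x := rfl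
  have hvG : ∀ n, G (v n) := fun n => (u n).2
  have hvd : ∀ n, dist (v (n + 1)) (v n) ≤ k / M (v n) := fun n => hfd (v n) (hvG n)
  have hvM : ∀ n, 2 * M (v n) < M (v (n + 1)) := fun n => hfM (v n) (hvG n)
  have grow : ∀ n, 2 ^ n * M x ≤ M (v n) := by
    intro n
    induction n with
    | zero => simp [hv0]
    | succ n ih =>
      have := hvM n
      calc 2 ^ (n + 1) * M x = 2 * (2 ^ n * M x) := by ring
        _ ≤ 2 * M (v n) := by linarith
        _ ≤ M (v (n + 1)) := this.le
  have Mvpos : ∀ n, 0 < M (v n) := fun n => hMpos _ (hvG n).1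
  have powpos : ∀ n : ℕ, (0 : ℝ) < 2 ^ n * M x := fun n => by positivity
  have hdist : ∀ n, dist (v n) (v (n + 1)) ≤ (k / M x) * (1 / 2) ^ n := by
    intro n
    rw [dist_comm]
    calc dist (v (n + 1)) (v n) ≤ k / M (v n) := hvd n
      _ ≤ k / (2 ^ n * M x) := div_le_div_of_nonneg_left hk.le (powpos n) (grow n)
      _ = (k / M x) * (1 / 2) ^ n := by
          rw [one_div, inv_pow, mul_comm (k / M x), inv_mul_eq_div, div_div, mul_comm]
  have hcauchy : CauchySeq v := cauchySeq_of_le_geometric (1 / 2) (k / M x) (by norm_num) hdist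
  obtain ⟨a, ha⟩ := cauchySeq_tendsto_of_complete hcauchy
  have hdx : ∀ n, dist x (v n) ≤ 2 * k / M x := by
    intro n
    calc dist x (v n) = dist (v 0) (v n) := by rw [hv0]
      _ ≤ ∑ i ∈ Finset.range n, dist (v i) (v (i + 1)) := dist_le_range_sum_dist v n
      _ ≤ ∑ i ∈ Finset.range n, (k / M x) * (1 / 2) ^ i :=
          Finset.sum_le_sum fun i _ => hdist i
      _ = (k / M x) * ∑ i ∈ Finset.range n, (1 / 2 : ℝ) ^ i := by rw [Finset.mul_sum]
      _ ≤ (k / M x) * 2 := by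
          have := sum_geometric_two_le n
          have hknn : 0 ≤ k / M x := by positivity
          nlinarith
      _ = 2 * k / M x := by ring
  -- infEdist lower bound along the sequence
  set ε : ℝ≥0∞ := EMetric.infEdist x Γ - ENNReal.ofReal (2 * k / M x) with hε
  have εpos : 0 < ε := tsub_pos_of_lt hMx
  have hlow : ∀ n, ε ≤ EMetric.infEdist (v n) Γ := by
    intro n
    rw [hε, tsub_le_iff_right]
    calc EMetric.infEdist x Γ ≤ EMetric.infEdist (v n) Γ + edist x (v n) :=
        infEdist_le_infEdist_add_edist
      _ ≤ EMetric.infEdist (v n) Γ + ENNReal.ofReal (2 * k / M x) := by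
          gcongr
          rw [edist_dist]
          exact ENNReal.ofReal_le_ofReal (hdx n)
  have haS : a ∈ S := hcl.mem_of_tendsto ha (Eventually.of_forall fun n => hsub (hvG n).1)
  have halow : ε ≤ EMetric.infEdist a Γ := by
    have hc : Tendsto (fun n => EMetric.infEdist (v n) Γ) atTop (𝓝 (EMetric.infEdist a Γ)) :=
      (EMetric.continuous_infEdist.tendsto a).comp ha
    exact ge_of_tendsto' hc hlow
  have haD : a ∈ D := by
    by_contra haD
    have : a ∈ Γ := ⟨haS, haD⟩
    have h0 : EMetric.infEdist a Γ = 0 := EMetric.infEdist_zero_of_mem this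
    rw [h0] at halow
    exact εpos.ne' (le_antisymm halow zero_le)
  have hKcomp : IsCompact (insert a (Set.range v)) := ha.isCompact_insert_range
  have hKD : insert a (Set.range v) ⊆ D := by
    rintro w (rfl | ⟨n, rfl⟩)
    · exact haD
    · exact (hvG n).1
  obtain ⟨B, hB⟩ := hbdd _ hKD hKcomp
  obtain ⟨n, hn⟩ := pow_unbounded_of_one_lt (B / M x) (y := (2 : ℝ)) one_lt_two
  have hBlt : B < 2 ^ n * M x := by
    rw [div_lt_iff₀ Mxpos] at hn
    linarith
  have := hB (v n) (Set.mem_insert_of_mem _ ⟨n, rfl⟩)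
  linarith [grow n]
end
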